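/- There is no natural number n and no BST⁺ formula Ψ over the variable type Fin (n + 2) such that, for all sets a, b : ZFSet, a is a member of b if and only if there exists an assignment M : Fin (n + 2) → ZFSet with M 0 = a and M 1 = b that satisfies Ψ. (That is, the membership atom x ∈ y is not existentially expressible in BST⁺.) -/

import Mathlib

/-- BST⁺ formulae over a variable type `V`: atoms `x = y \ z` combined with
conjunction, disjunction and negation. -/
inductive BSTFormula (V : Type*) : Type _
  | atom : V → V → V → BSTFormula V
  | and  : BSTFormula V → BSTFormula V → BSTFormula V
  | or   : BSTFormula V → BSTFormula V → BSTFormula V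
  | not  : BSTFormula V → BSTFormula V

/-- Satisfaction of a BST⁺ formula by a set assignment. -/
def BSTFormula.Satisfies {V : Type*} (M : V → ZFSet) : BSTFormula V → Prop
  | .atom x y z => M x = M y \ M z
  | .and f g    => f.Satisfies M ∧ g.Satisfies M
  | .or f g     => f.Satisfies M ∨ g.Satisfies M
  | .not f      => ¬ f.Satisfies M

/-- An assignment `M : V → ZFSet` is `b`-flat if every member of every value of `M`
has rank exactly `b`. -/
def IsFlat {V : Type*} (b : Ordinal) (M : V → ZFSet) : Prop :=
  ∀ v : V, ∀ u : ZFSet, u ∈ M v → u.rank = b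

/-- von Neumann natural numbers inside `ZFSet`. -/
def vonNat : ℕ → ZFSet
  | 0 => ∅
  | k + 1 => insert (vonNat k) (vonNat k)

lemma vonNat_rank : ∀ k : ℕ, (vonNat k).rank = k
  | 0 => ZFSet.rank_empty
  | k + 1 => by
      rw [vonNat, ZFSet.rank_insert, vonNat_rank k,
        sup_eq_left.mpr (Order.le_succ _), ← Ordinal.add_one_eq_succ, Nat.cast_succ]

lemma vonNat_inj : Function.Injective vonNat := by
  intro a b h
  have := congrArg ZFSet.rank h
  rw [vonNat_rank, vonNat_rank] at this
  exact_mod_cast this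

lemma empty_mem_vonNat_succ : ∀ k : ℕ, (∅ : ZFSet) ∈ vonNat (k + 1)
  | 0 => ZFSet.mem_insert_iff.mpr (Or.inl rfl)
  | k + 1 => ZFSet.mem_insert_iff.mpr (Or.inr (empty_mem_vonNat_succ k))

lemma vonNat_mem_omega : ∀ k : ℕ, vonNat k ∈ ZFSet.omega
  | 0 => ZFSet.omega_zero
  | k + 1 => ZFSet.omega_succ (vonNat_mem_omega k)

/-- Satisfaction of a BST⁺ formula only depends on the realized membership
patterns of the assignment. -/
lemma satisfies_congr {V : Type*} {M N : V → ZFSet}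
    (h1 : ∀ u : ZFSet, ∃ u', ∀ v, u ∈ M v ↔ u' ∈ N v)
    (h2 : ∀ u' : ZFSet, ∃ u, ∀ v, u' ∈ N v ↔ u ∈ M v) :
    ∀ Ψ : BSTFormula V, Ψ.Satisfies M ↔ Ψ.Satisfies N := by
  intro Ψ
  induction Ψ with
  | atom x y z =>
      show (M x = M y \ M z) ↔ (N x = N y \ N z)
      rw [ZFSet.ext_iff, ZFSet.ext_iff]
      simp only [ZFSet.mem_sdiff]
      constructor
      · intro h u'
        obtain ⟨u, hu⟩ := h2 u'
        rw [hu, hu, hu]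
        exact h u
      · intro h u
        obtain ⟨u', hu⟩ := h1 u
        rw [hu, hu, hu]
        exact h u'
  | and f g hf hg => exact and_congr hf hg
  | or f g hf hg => exact or_congr hf hg
  | not f hf => exact not_congr hf

theorem mem_not_existentially_expressible :
    ¬ ∃ (n : ℕ) (Ψ : BSTFormula (Fin (n + 2))),
        ∀ a b : ZFSet, a ∈ b ↔
          ∃ M : Fin (n + 2) → ZFSet, M 0 = a ∧ M 1 = b ∧ Ψ.Satisfies M := by
  classical
  rintro ⟨n, Ψ, H⟩
  -- start from a genuine membership, e.g. {∅} ∈ {{∅}}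
  have hab : ({∅} : ZFSet) ∈ ({{∅}} : ZFSet) := ZFSet.mem_singleton.mpr rfl
  obtain ⟨M, hM0, hM1, hSat⟩ := (H _ _).mp hab
  obtain ⟨enc, enc_inj⟩ := Countable.exists_injective_nat (Set (Fin (n + 2)))
  -- code each realized pattern by a distinct nonzero von Neumann natural
  set code : Set (Fin (n + 2)) → ZFSet := fun p => vonNat (enc p + 1) with hcode
  have code_inj : Function.Injective code := by
    intro p q h
    exact enc_inj (by have := vonNat_inj h; omega)
  set R : Set (Set (Fin (n + 2))) := {p | ∃ u : ZFSet, ∀ v, u ∈ M v ↔ v ∈ p} with hR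
  set N : Fin (n + 2) → ZFSet :=
    fun v => ZFSet.sep (fun x => ∃ p ∈ R, v ∈ p ∧ x = code p) ZFSet.omega with hN
  have memN : ∀ (v : Fin (n + 2)) (x : ZFSet),
      x ∈ N v ↔ ∃ p ∈ R, v ∈ p ∧ x = code p := by
    intro v x
    rw [hN, ZFSet.mem_sep]
    constructor
    · rintro ⟨-, h⟩; exact h
    · rintro ⟨p, hp, hv, rfl⟩
      exact ⟨vonNat_mem_omega _, p, hp, hv, rfl⟩
  have code_pattern : ∀ p ∈ R, ∀ v, code p ∈ N v ↔ v ∈ p := by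
    intro p hp v
    rw [memN]
    constructor
    · rintro ⟨q, _, hv, hpq⟩
      rwa [code_inj hpq]
    · intro hv
      exact ⟨p, hp, hv, rfl⟩
  -- N realizes the same membership patterns as M
  have h1 : ∀ u : ZFSet, ∃ u', ∀ v, u ∈ M v ↔ u' ∈ N v := by
    intro u
    have hp : ({v | u ∈ M v} : Set (Fin (n + 2))) ∈ R := ⟨u, fun v => Iff.rfl⟩
    exact ⟨code _, fun v => (code_pattern _ hp v).symm⟩
  have h2 : ∀ u' : ZFSet, ∃ u, ∀ v, u' ∈ N v ↔ u ∈ M v := by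
    intro u'
    by_cases h : ∃ p ∈ R, u' = code p
    · obtain ⟨p, hp, rfl⟩ := h
      obtain ⟨u, hu⟩ := hp
      exact ⟨u, fun v => (code_pattern _ ⟨u, hu⟩ v).trans (hu v).symm⟩
    · -- u' is not a code, so it is in no N v; find a set in no M v
      set S : ZFSet := (List.finRange (n + 2)).foldr (fun v s => M v ∪ s) ∅ with hSdef
      have memS : ∀ (l : List (Fin (n + 2))) (x : ZFSet),
          x ∈ l.foldr (fun v s => M v ∪ s) ∅ ↔ ∃ v ∈ l, x ∈ M v := by
        intro l
        induction l with
        | nil => intro x; simp [ZFSet.notMem_empty]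
        | cons a l ih => intro x; simp [ZFSet.mem_union, ih]
      refine ⟨S, fun v => ⟨fun hv => absurd hv ?_, fun hv => absurd ?_ (ZFSet.mem_irrefl S)⟩⟩
      · rw [memN]
        rintro ⟨p, hp, -, rfl⟩
        exact h ⟨p, hp, rfl⟩
      · rw [hSdef, memS]
        exact ⟨v, List.mem_finRange v, hv⟩
  have hSatN : Ψ.Satisfies N := (satisfies_congr h1 h2 Ψ).mp hSat
  have hmem : N 0 ∈ N 1 := (H (N 0) (N 1)).mpr ⟨N, rfl, rfl, hSatN⟩
  rw [memN] at hmem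
  obtain ⟨p, _, _, hNp⟩ := hmem
  have hemp : (∅ : ZFSet) ∈ N 0 := by
    rw [hNp, hcode]; exact empty_mem_vonNat_succ _
  rw [memN] at hemp
  obtain ⟨q, _, _, hq'⟩ := hemp
  have : (∅ : ZFSet) ∈ code q := empty_mem_vonNat_succ _
  rw [← hq'] at this
  exact ZFSet.notMem_empty _ this
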